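/- The observables A_{ij} = uᵢpⱼ − uⱼpᵢ, B_{ij} = wᵢϖⱼ − wⱼϖᵢ, and C_{ij} = −uᵢϖⱼ − pᵢwⱼ all Poisson-commute with both constraints H = (w² − u²)/2 and D = u·p + w·ϖ on the constraint surface H = D = 0; indeed A_{ij} and B_{ij} commute with H and D identically, and {H, C_{ij}} and {D, C_{ij}} vanish identically. -/

import Mathlib

open scoped BigOperators

/-- The canonical Poisson bracket on T*ℝ^{p+q}. -/
noncomputable def poissonBracket (p q : ℕ)
    (f g : ((Fin p → ℝ) × (Fin p → ℝ) × (Fin q → ℝ) × (Fin q → ℝ)) → ℝ)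
    (x : (Fin p → ℝ) × (Fin p → ℝ) × (Fin q → ℝ) × (Fin q → ℝ)) : ℝ :=
  (∑ i, (fderiv ℝ f x (Pi.single i 1, 0, 0, 0) * fderiv ℝ g x (0, Pi.single i 1, 0, 0)
      - fderiv ℝ f x (0, Pi.single i 1, 0, 0) * fderiv ℝ g x (Pi.single i 1, 0, 0, 0)))
  + (∑ j, (fderiv ℝ f x (0, 0, Pi.single j 1, 0) * fderiv ℝ g x (0, 0, 0, Pi.single j 1)
      - fderiv ℝ f x (0, 0, 0, Pi.single j 1) * fderiv ℝ g x (0, 0, Pi.single j 1, 0)))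

noncomputable def Hfun (p q : ℕ)
    (x : (Fin p → ℝ) × (Fin p → ℝ) × (Fin q → ℝ) × (Fin q → ℝ)) : ℝ :=
  ((∑ j, (x.2.2.1 j)^2) - ∑ i, (x.1 i)^2) / 2

noncomputable def Dfun (p q : ℕ)
    (x : (Fin p → ℝ) × (Fin p → ℝ) × (Fin q → ℝ) × (Fin q → ℝ)) : ℝ :=
  (∑ i, x.1 i * x.2.1 i) + ∑ j, x.2.2.1 j * x.2.2.2 j

/-- A_{ij} = uᵢpⱼ − uⱼpᵢ. -/
noncomputable def Afun (p q : ℕ) (i j : Fin p)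
    (x : (Fin p → ℝ) × (Fin p → ℝ) × (Fin q → ℝ) × (Fin q → ℝ)) : ℝ :=
  x.1 i * x.2.1 j - x.1 j * x.2.1 i

/-- B_{ij} = wᵢϖⱼ − wⱼϖᵢ. -/
noncomputable def Bfun (p q : ℕ) (i j : Fin q)
    (x : (Fin p → ℝ) × (Fin p → ℝ) × (Fin q → ℝ) × (Fin q → ℝ)) : ℝ :=
  x.2.2.1 i * x.2.2.2 j - x.2.2.1 j * x.2.2.2 i

/-- C_{ij} = −uᵢϖⱼ − pᵢwⱼ. -/
noncomputable def Cfun (p q : ℕ) (i : Fin p) (j : Fin q)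
    (x : (Fin p → ℝ) × (Fin p → ℝ) × (Fin q → ℝ) × (Fin q → ℝ)) : ℝ :=
  -(x.1 i * x.2.2.2 j) - x.2.1 i * x.2.2.1 j


/- ### Auxiliary machinery -/

abbrev PhSp (p q : ℕ) := (Fin p → ℝ) × (Fin p → ℝ) × (Fin q → ℝ) × (Fin q → ℝ)

noncomputable def cU (p q : ℕ) (i : Fin p) : PhSp p q →L[ℝ] ℝ :=
  (ContinuousLinearMap.proj i).comp (ContinuousLinearMap.fst ℝ _ _)
noncomputable def cP (p q : ℕ) (i : Fin p) : PhSp p q →L[ℝ] ℝ :=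
  ((ContinuousLinearMap.proj i).comp (ContinuousLinearMap.fst ℝ _ _)).comp
    (ContinuousLinearMap.snd ℝ _ _)
noncomputable def cW (p q : ℕ) (j : Fin q) : PhSp p q →L[ℝ] ℝ :=
  (((ContinuousLinearMap.proj j).comp (ContinuousLinearMap.fst ℝ _ _)).comp
    (ContinuousLinearMap.snd ℝ _ _)).comp (ContinuousLinearMap.snd ℝ _ _)
noncomputable def cV (p q : ℕ) (j : Fin q) : PhSp p q →L[ℝ] ℝ :=
  (((ContinuousLinearMap.proj j).comp (ContinuousLinearMap.snd ℝ _ _)).comp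
    (ContinuousLinearMap.snd ℝ _ _)).comp (ContinuousLinearMap.snd ℝ _ _)

lemma hcU (p q : ℕ) (i : Fin p) (x : PhSp p q) :
    HasFDerivAt (fun x : PhSp p q => x.1 i) (cU p q i) x := (cU p q i).hasFDerivAt
lemma hcP (p q : ℕ) (i : Fin p) (x : PhSp p q) :
    HasFDerivAt (fun x : PhSp p q => x.2.1 i) (cP p q i) x := (cP p q i).hasFDerivAt
lemma hcW (p q : ℕ) (j : Fin q) (x : PhSp p q) :
    HasFDerivAt (fun x : PhSp p q => x.2.2.1 j) (cW p q j) x := (cW p q j).hasFDerivAt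
lemma hcV (p q : ℕ) (j : Fin q) (x : PhSp p q) :
    HasFDerivAt (fun x : PhSp p q => x.2.2.2 j) (cV p q j) x := (cV p q j).hasFDerivAt

@[simp] lemma cU_apply (p q : ℕ) (i : Fin p) (v : PhSp p q) : cU p q i v = v.1 i := rfl
@[simp] lemma cP_apply (p q : ℕ) (i : Fin p) (v : PhSp p q) : cP p q i v = v.2.1 i := rfl
@[simp] lemma cW_apply (p q : ℕ) (j : Fin q) (v : PhSp p q) : cW p q j v = v.2.2.1 j := rfl
@[simp] lemma cV_apply (p q : ℕ) (j : Fin q) (v : PhSp p q) : cV p q j v = v.2.2.2 j := rfl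

lemma fderiv_Hfun (p q : ℕ) (x v : PhSp p q) :
    fderiv ℝ (Hfun p q) x v = (∑ j, x.2.2.1 j * v.2.2.1 j) - ∑ i, x.1 i * v.1 i := by
  have heq : Hfun p q =
      fun x : PhSp p q => ((∑ j, x.2.2.1 j * x.2.2.1 j) - ∑ i, x.1 i * x.1 i) * (1/2 : ℝ) := by
    funext y; simp [Hfun, pow_two]; ring
  rw [heq]
  have hH := (((HasFDerivAt.fun_sum (fun j (_ : j ∈ Finset.univ) => (hcW p q j x).fun_mul (hcW p q j x))).fun_sub
      (HasFDerivAt.fun_sum (fun i (_ : i ∈ Finset.univ) => (hcU p q i x).fun_mul (hcU p q i x)))).mul_const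
      (1/2 : ℝ))
  rw [hH.fderiv]
  simp [ContinuousLinearMap.sum_apply, Finset.sum_add_distrib]
  ring

lemma fderiv_Dfun (p q : ℕ) (x v : PhSp p q) :
    fderiv ℝ (Dfun p q) x v =
      ((∑ i, (x.1 i * v.2.1 i + x.2.1 i * v.1 i))
        + ∑ j, (x.2.2.1 j * v.2.2.2 j + x.2.2.2 j * v.2.2.1 j)) := by
  have heq : Dfun p q =
      fun x : PhSp p q => (∑ i, x.1 i * x.2.1 i) + ∑ j, x.2.2.1 j * x.2.2.2 j := rfl
  rw [heq]
  have hD := ((HasFDerivAt.fun_sum (fun i (_ : i ∈ Finset.univ) => (hcU p q i x).fun_mul (hcP p q i x))).fun_add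
      (HasFDerivAt.fun_sum (fun j (_ : j ∈ Finset.univ) => (hcW p q j x).fun_mul (hcV p q j x))))
  rw [hD.fderiv]
  simp [ContinuousLinearMap.sum_apply]

lemma fderiv_Afun (p q : ℕ) (i j : Fin p) (x v : PhSp p q) :
    fderiv ℝ (Afun p q i j) x v =
      (x.1 i * v.2.1 j + x.2.1 j * v.1 i) - (x.1 j * v.2.1 i + x.2.1 i * v.1 j) := by
  have heq : Afun p q i j = fun x : PhSp p q => x.1 i * x.2.1 j - x.1 j * x.2.1 i := rfl
  rw [heq]
  have hA := ((hcU p q i x).fun_mul (hcP p q j x)).fun_sub ((hcU p q j x).fun_mul (hcP p q i x))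
  rw [hA.fderiv]
  simp

lemma fderiv_Bfun (p q : ℕ) (i j : Fin q) (x v : PhSp p q) :
    fderiv ℝ (Bfun p q i j) x v =
      (x.2.2.1 i * v.2.2.2 j + x.2.2.2 j * v.2.2.1 i)
        - (x.2.2.1 j * v.2.2.2 i + x.2.2.2 i * v.2.2.1 j) := by
  have heq : Bfun p q i j = fun x : PhSp p q => x.2.2.1 i * x.2.2.2 j - x.2.2.1 j * x.2.2.2 i := rfl
  rw [heq]
  have hB := ((hcW p q i x).fun_mul (hcV p q j x)).fun_sub ((hcW p q j x).fun_mul (hcV p q i x))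
  rw [hB.fderiv]
  simp

lemma fderiv_Cfun (p q : ℕ) (i : Fin p) (j : Fin q) (x v : PhSp p q) :
    fderiv ℝ (Cfun p q i j) x v =
      -(x.1 i * v.2.2.2 j + x.2.2.2 j * v.1 i) - (x.2.1 i * v.2.2.1 j + x.2.2.1 j * v.2.1 i) := by
  have heq : Cfun p q i j = fun x : PhSp p q => -(x.1 i * x.2.2.2 j) - x.2.1 i * x.2.2.1 j := rfl
  rw [heq]
  have hC := (((hcU p q i x).fun_mul (hcV p q j x)).fun_neg).fun_sub ((hcP p q i x).fun_mul (hcW p q j x))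
  rw [hC.fderiv]
  simp

/-- The observables A, B, C Poisson-commute with both constraints H and D,
identically on phase space (hence in particular on the constraint surface). -/
theorem observables_commute_with_constraints (p q : ℕ) :
    (∀ (i j : Fin p) x, poissonBracket p q (Hfun p q) (Afun p q i j) x = 0) ∧
    (∀ (i j : Fin p) x, poissonBracket p q (Dfun p q) (Afun p q i j) x = 0) ∧
    (∀ (i j : Fin q) x, poissonBracket p q (Hfun p q) (Bfun p q i j) x = 0) ∧
    (∀ (i j : Fin q) x, poissonBracket p q (Dfun p q) (Bfun p q i j) x = 0) ∧
    (∀ (i : Fin p) (j : Fin q) x, poissonBracket p q (Hfun p q) (Cfun p q i j) x = 0) ∧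
    (∀ (i : Fin p) (j : Fin q) x, poissonBracket p q (Dfun p q) (Cfun p q i j) x = 0) := by
  have sgl : ∀ (n : ℕ) (k : Fin n) (f : Fin n → ℝ),
      (∑ a, f a * (Pi.single k (1:ℝ) : Fin n → ℝ) a) = f k := by
    intro n k f
    simp [Pi.single_apply, mul_ite, Finset.sum_ite_eq']
  refine ⟨?_, ?_, ?_, ?_, ?_, ?_⟩ <;>
    intro i j x <;>
    simp only [poissonBracket, fderiv_Hfun, fderiv_Dfun, fderiv_Afun, fderiv_Bfun, fderiv_Cfun] <;>
    simp [Pi.single_apply, mul_ite, Finset.sum_ite_eq', Finset.mul_sum, Finset.sum_sub_distrib,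
      Finset.sum_add_distrib, mul_comm, mul_assoc, mul_left_comm] <;>
    (try (simp [sub_mul, mul_sub, ite_mul, mul_ite, Finset.sum_sub_distrib, Finset.sum_ite_eq,
      Finset.sum_ite_eq', mul_comm])) <;>
    (try ring)
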